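/- Let (x^k, u^k) be NCS iterates and let x⋆ be a primal solution with dual certificate u⋆. Then both sequences k ↦ D(x^{k+1} − x^k, u^{k+1} − u^k) and k ↦ D(x^k − x⋆, u^k − u⋆) are nonincreasing in k. -/

import Mathlib

open Matrix

-- Moore–Penrose pseudoinverse, characterized by the four Penrose conditions
-- (which determine it uniquely when a solution exists).
open Classical in
noncomputable def mpInv {k l : ℕ} (A : Matrix (Fin k) (Fin l) ℝ) : Matrix (Fin l) (Fin k) ℝ :=
  if h : ∃ X : Matrix (Fin l) (Fin k) ℝ,
      A * X * A = A ∧ X * A * X = X ∧ (A * X)ᵀ = A * X ∧ (X * A)ᵀ = X * A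
  then h.choose else 0

-- `ProxRel g α z u'` says that `u' = prox_{αg*}(z)`, i.e. that
-- `α⁻¹ (z - u')` is a minimizer of `x ↦ g(x) + (α/2)‖x - z/α‖²`
-- (by Moreau's identity `prox_{αg*}(z) = z - α argmin_x {g(x) + (α/2)‖x - z/α‖²}`).
def ProxRel {m : ℕ} (g : (Fin m → ℝ) → ℝ) (α : ℝ) (z u' : Fin m → ℝ) : Prop :=
  IsMinOn (fun y : Fin m → ℝ => g y + (α / 2) * ((y - α⁻¹ • z) ⬝ᵥ (y - α⁻¹ • z)))
    Set.univ (α⁻¹ • (z - u'))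

/-- The squared seminorm `D²(x, u) = ‖u − αAx‖² + ‖x‖²_{αM − α²AᵀA}`. -/
noncomputable def Dsq {m n : ℕ} (A : Matrix (Fin m) (Fin n) ℝ) (α : ℝ)
    (M : Matrix (Fin n) (Fin n) ℝ) (x : Fin n → ℝ) (u : Fin m → ℝ) : ℝ :=
  (u - α • (A *ᵥ x)) ⬝ᵥ (u - α • (A *ᵥ x)) +
    x ⬝ᵥ ((α • M - α ^ 2 • (Aᵀ * A)) *ᵥ x)

/-- The seminorm `D(x, u) = (‖u − αAx‖² + ‖x‖²_{αM − α²AᵀA})^{1/2}`. -/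
noncomputable def Dnorm {m n : ℕ} (A : Matrix (Fin m) (Fin n) ℝ) (α : ℝ)
    (M : Matrix (Fin n) (Fin n) ℝ) (x : Fin n → ℝ) (u : Fin m → ℝ) : ℝ :=
  Real.sqrt (Dsq A α M x u)

/-! ### Auxiliary lemmas -/

theorem NCS.exists_penrose {n : ℕ} (M : Matrix (Fin n) (Fin n) ℝ) (hM : M.IsHermitian) :
    ∃ X : Matrix (Fin n) (Fin n) ℝ,
      M * X * M = M ∧ X * M * X = X ∧ (M * X)ᵀ = M * X ∧ (X * M)ᵀ = X * M := by
  classical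
  set U : Matrix (Fin n) (Fin n) ℝ := (hM.eigenvectorUnitary : Matrix (Fin n) (Fin n) ℝ) with hU
  have hUU : star U * U = 1 := Unitary.coe_star_mul_self _
  set d : Fin n → ℝ := RCLike.ofReal ∘ hM.eigenvalues with hd
  have hspec : M = U * diagonal d * star U := hM.spectral_theorem
  have hstarU : star U = Uᵀ := by
    rw [star_eq_conjTranspose, conjTranspose_eq_transpose_of_trivial]
  have key : ∀ D1 D2 : Matrix (Fin n) (Fin n) ℝ,
      (U * D1 * star U) * (U * D2 * star U) = U * (D1 * D2) * star U := by
    intro D1 D2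
    calc (U * D1 * star U) * (U * D2 * star U)
        = U * D1 * ((star U * U) * (D2 * star U)) := by simp only [mul_assoc]
      _ = U * (D1 * D2) * star U := by rw [hUU, one_mul]; simp only [mul_assoc]
  have tkey : ∀ f : Fin n → ℝ, (U * diagonal f * star U)ᵀ = U * diagonal f * star U := by
    intro f
    rw [hstarU, transpose_mul, transpose_mul, transpose_transpose, diagonal_transpose,
      mul_assoc]
  refine ⟨U * diagonal (fun i => (d i)⁻¹) * star U, ?_, ?_, ?_, ?_⟩
  · rw [hspec, key, key, diagonal_mul_diagonal, diagonal_mul_diagonal]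
    congr 1
    · congr 1; funext i; by_cases h : d i = 0 <;> field_simp [h]
  · rw [hspec, key, key, diagonal_mul_diagonal, diagonal_mul_diagonal]
    congr 1
    · congr 1; funext i; by_cases h : d i = 0 <;> field_simp [h]
  · rw [hspec, key, diagonal_mul_diagonal]; exact tkey _
  · rw [hspec, key, diagonal_mul_diagonal]; exact tkey _

theorem NCS.dp_self_nonneg {k : ℕ} (v : Fin k → ℝ) : 0 ≤ v ⬝ᵥ v :=
  Finset.sum_nonneg fun _ _ => mul_self_nonneg _

theorem NCS.mpInv_range {m n : ℕ} (A : Matrix (Fin m) (Fin n) ℝ) (α : ℝ) (hα : 0 < α)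
    (M : Matrix (Fin n) (Fin n) ℝ) (hMsymm : Mᵀ = M)
    (hMpsd : (M - α • (Aᵀ * A)).PosSemidef) (v : Fin m → ℝ) :
    M *ᵥ (mpInv M *ᵥ (Aᵀ *ᵥ v)) = Aᵀ *ᵥ v := by
  classical
  have hherm : M.IsHermitian := by
    rw [Matrix.IsHermitian, conjTranspose_eq_transpose_of_trivial, hMsymm]
  have hex := NCS.exists_penrose M hherm
  have hpen : M * mpInv M * M = M ∧ mpInv M * M * mpInv M = mpInv M ∧
      (M * mpInv M)ᵀ = M * mpInv M ∧ (mpInv M * M)ᵀ = mpInv M * M := by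
    rw [mpInv, dif_pos hex]; exact hex.choose_spec
  set X := mpInv M
  set N : Matrix (Fin n) (Fin n) ℝ := 1 - M * X with hN
  have hNsymm : Nᵀ = N := by
    rw [hN, transpose_sub, transpose_one, hpen.2.2.1]
  have hMN : M * N = 0 := by
    have h1 : N * M = 0 := by
      rw [hN, sub_mul, one_mul, hpen.1, sub_self]
    have := congrArg transpose h1
    rwa [transpose_mul, hNsymm, hMsymm, transpose_zero] at this
  have hker : ∀ w : Fin n → ℝ, M *ᵥ w = 0 → A *ᵥ w = 0 := by
    intro w hw
    have h1 := hMpsd.dotProduct_mulVec_nonneg w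
    have h2 : w ⬝ᵥ ((M - α • (Aᵀ * A)) *ᵥ w) = - (α * ((A *ᵥ w) ⬝ᵥ (A *ᵥ w))) := by
      rw [sub_mulVec, dotProduct_sub, hw, dotProduct_zero, smul_mulVec,
        dotProduct_smul, ← mulVec_mulVec, dotProduct_mulVec, vecMul_transpose]
      simp [smul_eq_mul]
    rw [show (star w) = w from rfl, h2] at h1
    have h3 : (A *ᵥ w) ⬝ᵥ (A *ᵥ w) ≤ 0 := by nlinarith
    exact dotProduct_self_eq_zero.mp (le_antisymm h3 (NCS.dp_self_nonneg _))
  have hAN : ∀ w : Fin n → ℝ, A *ᵥ (N *ᵥ w) = 0 := by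
    intro w
    apply hker
    rw [mulVec_mulVec, hMN, zero_mulVec]
  have hsd : ∀ a b : Fin n → ℝ, (N *ᵥ a) ⬝ᵥ b = a ⬝ᵥ (N *ᵥ b) := by
    intro a b
    rw [dotProduct_mulVec a, ← vecMul_transpose, hNsymm]
  set r : Fin n → ℝ := N *ᵥ (Aᵀ *ᵥ v) with hr
  have hrz : r = 0 := by
    rw [← dotProduct_self_eq_zero]
    calc r ⬝ᵥ r = (Aᵀ *ᵥ v) ⬝ᵥ (N *ᵥ r) := hsd _ r
      _ = v ⬝ᵥ (A *ᵥ (N *ᵥ r)) := by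
          rw [dotProduct_mulVec v, mulVec_transpose]
      _ = 0 := by rw [hAN, dotProduct_zero]
  have h5 : Aᵀ *ᵥ v - (M * X) *ᵥ (Aᵀ *ᵥ v) = 0 := by
    have : (1 - M * X) *ᵥ (Aᵀ *ᵥ v) = 0 := hrz
    rwa [sub_mulVec, one_mulVec] at this
  rw [mulVec_mulVec]
  rw [sub_eq_zero] at h5
  exact h5.symm

theorem NCS.prox_sg {m : ℕ} {g : (Fin m → ℝ) → ℝ} (hg : ConvexOn ℝ Set.univ g)
    {α : ℝ} (hα : 0 < α) {z u' : Fin m → ℝ} (h : ProxRel g α z u') (y : Fin m → ℝ) :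
    g (α⁻¹ • (z - u')) + u' ⬝ᵥ (y - α⁻¹ • (z - u')) ≤ g y := by
  set p : Fin m → ℝ := α⁻¹ • (z - u') with hp
  set dv : Fin m → ℝ := y - p with hdv
  have hαne : α ≠ 0 := ne_of_gt hα
  have hc : p - α⁻¹ • z = -(α⁻¹ • u') := by
    rw [hp]; module
  have hdd : (0:ℝ) ≤ dv ⬝ᵥ dv := NCS.dp_self_nonneg _
  have hbd : ∀ t : ℝ, 0 < t → t ≤ 1 →
      g p + u' ⬝ᵥ dv ≤ g y + α / 2 * t * (dv ⬝ᵥ dv) := by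
    intro t ht ht1
    set w : Fin m → ℝ := p + t • dv with hw
    have hmin := isMinOn_iff.mp h w (Set.mem_univ w)
    have hconv : g w ≤ (1 - t) * g p + t * g y := by
      have := hg.2 (Set.mem_univ p) (Set.mem_univ y) (by linarith : (0:ℝ) ≤ 1 - t)
        (le_of_lt ht) (by ring)
      simpa [hw, hdv, show (1-t) • p + t • y = p + t • (y - p) by module] using this
    have hquad : (w - α⁻¹ • z) ⬝ᵥ (w - α⁻¹ • z)
        = (p - α⁻¹ • z) ⬝ᵥ (p - α⁻¹ • z) + 2 * t * ((p - α⁻¹ • z) ⬝ᵥ dv)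
          + t ^ 2 * (dv ⬝ᵥ dv) := by
      have hw' : w - α⁻¹ • z = (p - α⁻¹ • z) + t • dv := by rw [hw]; module
      rw [hw']
      simp only [dotProduct_add, add_dotProduct, dotProduct_smul, smul_dotProduct,
        smul_eq_mul]
      rw [dotProduct_comm dv (p - α⁻¹ • z)]
      ring
    have hcd : (p - α⁻¹ • z) ⬝ᵥ dv = -(α⁻¹ * (u' ⬝ᵥ dv)) := by
      rw [hc]; simp [smul_dotProduct, smul_eq_mul]
    rw [hquad, hcd, ← hp] at hmin
    have hmin2 : g p ≤ g w - t * (u' ⬝ᵥ dv) + α / 2 * t ^ 2 * (dv ⬝ᵥ dv) := by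
      have h6 : α / 2 * ((p - α⁻¹ • z) ⬝ᵥ (p - α⁻¹ • z) + 2 * t * -(α⁻¹ * (u' ⬝ᵥ dv))
            + t ^ 2 * (dv ⬝ᵥ dv))
          = α / 2 * ((p - α⁻¹ • z) ⬝ᵥ (p - α⁻¹ • z)) - t * (u' ⬝ᵥ dv)
            + α / 2 * t ^ 2 * (dv ⬝ᵥ dv) := by
        field_simp
        ring
      rw [h6] at hmin
      linarith
    nlinarith [hmin2, hconv, ht, hdd]
  by_contra hcon
  push_neg at hcon
  set ε : ℝ := g p + u' ⬝ᵥ dv - g y with hε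
  have hεpos : 0 < ε := by simp only [hε]; linarith
  set t : ℝ := min 1 (ε / (α / 2 * (dv ⬝ᵥ dv) + 1)) with hT
  have hden : 0 < α / 2 * (dv ⬝ᵥ dv) + 1 := by positivity
  have ht0 : 0 < t := lt_min one_pos (div_pos hεpos hden)
  have ht1 : t ≤ 1 := min_le_left _ _
  have := hbd t ht0 ht1
  have h2 : t ≤ ε / (α / 2 * (dv ⬝ᵥ dv) + 1) := min_le_right _ _
  have h3 : α / 2 * t * (dv ⬝ᵥ dv) < ε := by
    have h4 : α / 2 * t * (dv ⬝ᵥ dv) ≤ (ε / (α / 2 * (dv ⬝ᵥ dv) + 1)) * (α / 2 * (dv ⬝ᵥ dv)) := by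
      have : 0 ≤ α / 2 * (dv ⬝ᵥ dv) := by positivity
      nlinarith
    have h5 : (ε / (α / 2 * (dv ⬝ᵥ dv) + 1)) * (α / 2 * (dv ⬝ᵥ dv)) < ε := by
      rw [div_mul_eq_mul_div, div_lt_iff₀ hden]
      nlinarith
    linarith
  linarith

theorem NCS.Dsq_expand {m n : ℕ} (A : Matrix (Fin m) (Fin n) ℝ) (α : ℝ)
    (M : Matrix (Fin n) (Fin n) ℝ) (x : Fin n → ℝ) (u : Fin m → ℝ) :
    Dsq A α M x u
      = u ⬝ᵥ u - 2 * α * (u ⬝ᵥ (A *ᵥ x)) + α * (x ⬝ᵥ (M *ᵥ x)) := by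
  unfold Dsq
  have hAAT : x ⬝ᵥ ((Aᵀ * A) *ᵥ x) = (A *ᵥ x) ⬝ᵥ (A *ᵥ x) := by
    rw [← mulVec_mulVec, dotProduct_mulVec x, vecMul_transpose]
  have h1 : x ⬝ᵥ ((α • M - α ^ 2 • (Aᵀ * A)) *ᵥ x)
      = α * (x ⬝ᵥ (M *ᵥ x)) - α ^ 2 * ((A *ᵥ x) ⬝ᵥ (A *ᵥ x)) := by
    rw [sub_mulVec, dotProduct_sub, smul_mulVec, smul_mulVec,
      dotProduct_smul, dotProduct_smul, hAAT]
    simp [smul_eq_mul]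
  have h2 : (u - α • (A *ᵥ x)) ⬝ᵥ (u - α • (A *ᵥ x))
      = u ⬝ᵥ u - 2 * α * (u ⬝ᵥ (A *ᵥ x)) + α ^ 2 * ((A *ᵥ x) ⬝ᵥ (A *ᵥ x)) := by
    simp only [dotProduct_sub, sub_dotProduct, dotProduct_smul, smul_dotProduct,
      smul_eq_mul]
    rw [dotProduct_comm (A *ᵥ x) u]
    ring
  rw [h1, h2]; ring

theorem NCS.Dsq_nonneg {m n : ℕ} {A : Matrix (Fin m) (Fin n) ℝ} {α : ℝ} (hα : 0 < α)
    {M : Matrix (Fin n) (Fin n) ℝ} (hMpsd : (M - α • (Aᵀ * A)).PosSemidef)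
    (x : Fin n → ℝ) (u : Fin m → ℝ) : 0 ≤ Dsq A α M x u := by
  unfold Dsq
  have h1 : α • M - α ^ 2 • (Aᵀ * A) = α • (M - α • (Aᵀ * A)) := by
    rw [smul_sub, smul_smul, sq]
  have h2 : 0 ≤ x ⬝ᵥ ((α • (M - α • (Aᵀ * A))) *ᵥ x) := by
    rw [smul_mulVec, dotProduct_smul, smul_eq_mul]
    exact mul_nonneg (le_of_lt hα) (hMpsd.dotProduct_mulVec_nonneg x)
  rw [h1]
  exact add_nonneg (NCS.dp_self_nonneg _) h2

theorem NCS.dsq_step {m n : ℕ} (A : Matrix (Fin m) (Fin n) ℝ) {α : ℝ} (hα : 0 < α)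
    {M : Matrix (Fin n) (Fin n) ℝ} (hMsymm : Mᵀ = M)
    (hMpsd : (M - α • (Aᵀ * A)).PosSemidef)
    (X X' : Fin n → ℝ) (U U' : Fin m → ℝ)
    (hM : M *ᵥ X' = M *ᵥ X - Aᵀ *ᵥ U)
    (hmono : 0 ≤ U' ⬝ᵥ ((U - U') + α • (A *ᵥ ((2 : ℝ) • X' - X)))) :
    Dsq A α M X' U' ≤ Dsq A α M X U := by
  have hsym : X' ⬝ᵥ (M *ᵥ X) = X ⬝ᵥ (M *ᵥ X') := by
    rw [dotProduct_mulVec X']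
    conv_lhs => rw [← hMsymm]
    rw [vecMul_transpose, dotProduct_comm]
  have hAU : X' ⬝ᵥ (Aᵀ *ᵥ U) = U ⬝ᵥ (A *ᵥ X') := by
    rw [dotProduct_mulVec X', vecMul_transpose, dotProduct_comm]
  have hp3 : X' ⬝ᵥ (M *ᵥ X') = X ⬝ᵥ (M *ᵥ X') - U ⬝ᵥ (A *ᵥ X') := by
    have h := congrArg (fun w => X' ⬝ᵥ w) hM
    simp only [dotProduct_sub] at h
    rw [hsym, hAU] at h
    exact h
  have hp3' : α * (X' ⬝ᵥ (M *ᵥ X'))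
      = α * (X ⬝ᵥ (M *ᵥ X')) - α * (U ⬝ᵥ (A *ᵥ X')) := by
    rw [hp3]; ring
  have hpsd := NCS.Dsq_nonneg hα hMpsd (X - X') (U - U')
  rw [NCS.Dsq_expand] at hpsd
  simp only [mulVec_sub, dotProduct_sub, sub_dotProduct] at hpsd
  rw [hsym] at hpsd
  have hmono' : 0 ≤ U' ⬝ᵥ U - U' ⬝ᵥ U'
      + α * (2 * (U' ⬝ᵥ (A *ᵥ X')) - U' ⬝ᵥ (A *ᵥ X)) := by
    have h : A *ᵥ ((2 : ℝ) • X' - X) = (2 : ℝ) • (A *ᵥ X') - A *ᵥ X := by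
      rw [mulVec_sub, mulVec_smul]
    rw [h] at hmono
    simp only [dotProduct_add, dotProduct_sub, dotProduct_smul, smul_eq_mul] at hmono
    linarith
  rw [NCS.Dsq_expand, NCS.Dsq_expand]
  have hc1 : U ⬝ᵥ U' = U' ⬝ᵥ U := dotProduct_comm _ _
  nlinarith [hpsd, hmono', hp3', hc1]

theorem NCS.sg_mono {m : ℕ} {g : (Fin m → ℝ) → ℝ} {α : ℝ} (hα : 0 < α)
    (z₁ u₁' z₂ u₂' : Fin m → ℝ)
    (h₁ : ∀ y, g (α⁻¹ • (z₁ - u₁')) + u₁' ⬝ᵥ (y - α⁻¹ • (z₁ - u₁')) ≤ g y)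
    (h₂ : ∀ y, g (α⁻¹ • (z₂ - u₂')) + u₂' ⬝ᵥ (y - α⁻¹ • (z₂ - u₂')) ≤ g y) :
    0 ≤ (u₁' - u₂') ⬝ᵥ ((z₁ - z₂) - (u₁' - u₂')) := by
  have ha := h₁ (α⁻¹ • (z₂ - u₂'))
  have hb := h₂ (α⁻¹ • (z₁ - u₁'))
  set p₁ : Fin m → ℝ := α⁻¹ • (z₁ - u₁') with hp₁
  set p₂ : Fin m → ℝ := α⁻¹ • (z₂ - u₂') with hp₂
  have hd : p₁ - p₂ = α⁻¹ • ((z₁ - z₂) - (u₁' - u₂')) := by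
    rw [hp₁, hp₂]; module
  have hsum : 0 ≤ (u₁' - u₂') ⬝ᵥ (p₁ - p₂) := by
    have h1 : u₁' ⬝ᵥ (p₂ - p₁) + u₂' ⬝ᵥ (p₁ - p₂) ≤ 0 := by linarith
    have h2 : (u₁' - u₂') ⬝ᵥ (p₁ - p₂)
        = -(u₁' ⬝ᵥ (p₂ - p₁) + u₂' ⬝ᵥ (p₁ - p₂)) := by
      simp only [sub_dotProduct, dotProduct_sub]
      ring
    rw [h2]
    linarith
  rw [hd, dotProduct_smul, smul_eq_mul] at hsum
  have hinv : 0 < α⁻¹ := inv_pos.mpr hα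
  nlinarith [hsum, hinv]

theorem ncs_monotone
    {m n : ℕ}
    (A : Matrix (Fin m) (Fin n) ℝ) (b : Fin m → ℝ)
    (α : ℝ) (hα : 0 < α)
    (g : (Fin m → ℝ) → ℝ) (hg : ConvexOn ℝ Set.univ g)
    (M : Matrix (Fin n) (Fin n) ℝ) (hMsymm : Mᵀ = M)
    (hMpsd : (M - α • (Aᵀ * A)).PosSemidef)
    -- NCS iterates:
    (x : ℕ → Fin n → ℝ) (u : ℕ → Fin m → ℝ)
    (hx : ∀ k, x (k + 1) = x k - mpInv M *ᵥ (Aᵀ *ᵥ u k))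
    (hu : ∀ k, ProxRel g α
      (u k + α • (A *ᵥ ((2 : ℝ) • x (k + 1) - x k) - b)) (u (k + 1)))
    -- a primal solution x⋆ with dual certificate u⋆:
    (xs : Fin n → ℝ) (us : Fin m → ℝ)
    (hxs : ∀ y, g (A *ᵥ xs - b) ≤ g (A *ᵥ y - b))
    (hus : Aᵀ *ᵥ us = 0)
    (hsub : ∀ y, g (A *ᵥ xs - b) + us ⬝ᵥ (y - (A *ᵥ xs - b)) ≤ g y) :
    (∀ k : ℕ,
      Dnorm A α M (x (k + 2) - x (k + 1)) (u (k + 2) - u (k + 1)) ≤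
        Dnorm A α M (x (k + 1) - x k) (u (k + 1) - u k)) ∧
    (∀ k : ℕ,
      Dnorm A α M (x (k + 1) - xs) (u (k + 1) - us) ≤
        Dnorm A α M (x k - xs) (u k - us)) := by
  -- the exact primal step
  have hstep : ∀ k, M *ᵥ x (k + 1) = M *ᵥ x k - Aᵀ *ᵥ u k := by
    intro k
    rw [hx k, mulVec_sub, NCS.mpInv_range A α hα M hMsymm hMpsd]
  -- subgradient property of the dual steps
  have sg : ∀ k y, g (α⁻¹ • ((u k + α • (A *ᵥ ((2 : ℝ) • x (k + 1) - x k) - b)) - u (k + 1)))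
      + u (k + 1) ⬝ᵥ (y - α⁻¹ • ((u k + α • (A *ᵥ ((2 : ℝ) • x (k + 1) - x k) - b)) - u (k + 1)))
      ≤ g y := fun k => NCS.prox_sg hg hα (hu k)
  -- the saddle point as a "virtual iterate"
  have sgs : ∀ y, g (α⁻¹ • ((us + α • (A *ᵥ ((2 : ℝ) • xs - xs) - b)) - us))
      + us ⬝ᵥ (y - α⁻¹ • ((us + α • (A *ᵥ ((2 : ℝ) • xs - xs) - b)) - us)) ≤ g y := by
    have hps : α⁻¹ • ((us + α • (A *ᵥ ((2 : ℝ) • xs - xs) - b)) - us) = A *ᵥ xs - b := by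
      have h2 : (2 : ℝ) • xs - xs = xs := by module
      rw [h2, add_sub_cancel_left, smul_smul, inv_mul_cancel₀ (ne_of_gt hα), one_smul]
    intro y
    rw [hps]
    exact hsub y
  constructor
  · intro k
    apply Real.sqrt_le_sqrt
    apply NCS.dsq_step A hα hMsymm hMpsd
    · -- primal step relation for differences
      have h1 : M *ᵥ x (k + 2) = M *ᵥ x (k + 1) - Aᵀ *ᵥ u (k + 1) := hstep (k + 1)
      rw [mulVec_sub, mulVec_sub, mulVec_sub, h1, hstep k]
      abel
    · -- monotonicity of the subdifferential
      have h := NCS.sg_mono hα _ _ _ _ (sg (k + 1)) (sg k)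
      have heq : ((u (k + 1) + α • (A *ᵥ ((2 : ℝ) • x (k + 2) - x (k + 1)) - b))
            - (u k + α • (A *ᵥ ((2 : ℝ) • x (k + 1) - x k) - b)))
            - (u (k + 2) - u (k + 1))
          = ((u (k + 1) - u k) - (u (k + 2) - u (k + 1)))
            + α • (A *ᵥ ((2 : ℝ) • (x (k + 2) - x (k + 1)) - (x (k + 1) - x k))) := by
        simp only [mulVec_sub, mulVec_add, mulVec_smul, smul_sub, smul_add]
        module
      rwa [heq] at h
  · intro k
    apply Real.sqrt_le_sqrt
    apply NCS.dsq_step A hα hMsymm hMpsd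
    · rw [mulVec_sub, mulVec_sub, mulVec_sub, hstep k, hus]
      rw [sub_zero]
      abel
    · have h := NCS.sg_mono hα _ _ _ _ (sg k) sgs
      have heq : ((u k + α • (A *ᵥ ((2 : ℝ) • x (k + 1) - x k) - b))
            - (us + α • (A *ᵥ ((2 : ℝ) • xs - xs) - b)))
            - (u (k + 1) - us)
          = ((u k - us) - (u (k + 1) - us))
            + α • (A *ᵥ ((2 : ℝ) • (x (k + 1) - xs) - (x k - xs))) := by
        simp only [mulVec_sub, mulVec_add, mulVec_smul, smul_sub, smul_add]
        module
      rwa [heq] at h
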